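/- Let G, G' be graphs with distinguished vertex pairs (s,t) and (s',t'), and let D, D' be the corresponding digraphs obtained by directing every edge along a direction consistent with flow from s to t (respectively s' to t'). If every edge of G lies on an s–t path traversing it in a unique direction, then a bijection τ : V(G) → V(G') with τ(s)=s', τ(t)=t' is a graph isomorphism from G to G' if and only if it is a digraph isomorphism from D to D'. -/

import Mathlib

/-- Let `G`, `G'` be graphs with terminal pairs `(s,t)`, `(s',t')`, and let `D`, `D'` be
the corresponding orientations directing every edge consistently with flow from the
source to the sink (every edge lies on an `s`–`t` path traversing it in a unique
direction).  Then a bijection `τ` with `τ s = s'`, `τ t = t'` is a graph isomorphism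
from `G` to `G'` iff it is a digraph isomorphism from `D` to `D'`. -/
theorem graph_iso_iff_digraph_iso {V V' : Type*}
    (G : SimpleGraph V) (G' : SimpleGraph V')
    (s t : V) (s' t' : V') (D : V → V → Prop) (D' : V' → V' → Prop)
    (hDG : ∀ u v, D u v → G.Adj u v)
    (hdir : ∀ u v, G.Adj u v → (D u v ↔ ¬ D v u))
    (hcover : ∀ u v, D u v →
      ∃ p : G.Walk s t, p.IsPath ∧ ∃ d ∈ p.darts, d.fst = u ∧ d.snd = v)
    (hflow : ∀ p : G.Walk s t, p.IsPath → ∀ d ∈ p.darts, D d.fst d.snd)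
    (hDG' : ∀ u v, D' u v → G'.Adj u v)
    (hdir' : ∀ u v, G'.Adj u v → (D' u v ↔ ¬ D' v u))
    (hcover' : ∀ u v, D' u v →
      ∃ p : G'.Walk s' t', p.IsPath ∧ ∃ d ∈ p.darts, d.fst = u ∧ d.snd = v)
    (hflow' : ∀ p : G'.Walk s' t', p.IsPath → ∀ d ∈ p.darts, D' d.fst d.snd)
    (τ : V ≃ V') (hτs : τ s = s') (hτt : τ t = t') :
    (∀ u v, G.Adj u v ↔ G'.Adj (τ u) (τ v)) ↔ (∀ u v, D u v ↔ D' (τ u) (τ v)) := by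
  constructor
  · intro h u v
    let f : G ≃g G' := ⟨τ, (h _ _).symm⟩
    have hfx : ∀ x : V, f.toHom x = τ x := fun _ => rfl
    have hgx : ∀ x : V', f.symm.toHom x = τ.symm x := fun _ => rfl
    constructor
    · intro hD
      obtain ⟨p, hp, d, hd, hdu, hdv⟩ := hcover u v hD
      have := hflow' (((p.map f.toHom).copy (by rw [hfx]; exact hτs)
          (by rw [hfx]; exact hτt)))
        ((SimpleGraph.Walk.isPath_copy _ _ _).mpr
          (SimpleGraph.Walk.map_isPath_of_injective f.injective hp))
        (f.toHom.mapDart d)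
        (by rw [SimpleGraph.Walk.darts_copy, SimpleGraph.Walk.darts_map];
            exact List.mem_map_of_mem hd)
      have h2 : D' (τ d.toProd.1) (τ d.toProd.2) := this
      rw [hdu, hdv] at h2
      exact h2
    · intro hD'
      obtain ⟨p, hp, d, hd, hdu, hdv⟩ := hcover' (τ u) (τ v) hD'
      have := hflow (((p.map f.symm.toHom).copy
          (by rw [hgx]; simp [← hτs])
          (by rw [hgx]; simp [← hτt])))
        ((SimpleGraph.Walk.isPath_copy _ _ _).mpr
          (SimpleGraph.Walk.map_isPath_of_injective f.symm.injective hp))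
        (f.symm.toHom.mapDart d)
        (by rw [SimpleGraph.Walk.darts_copy, SimpleGraph.Walk.darts_map];
            exact List.mem_map_of_mem hd)
      have h2 : D (τ.symm d.toProd.1) (τ.symm d.toProd.2) := this
      rw [hdu, hdv] at h2
      simpa using h2
  · intro h u v
    constructor
    · intro hadj
      by_cases hD : D u v
      · exact hDG' _ _ ((h u v).mp hD)
      · have : D v u := by
          by_contra hvu
          exact hD ((hdir u v hadj).mpr hvu)
        exact (hDG' _ _ ((h v u).mp this)).symm
    · intro hadj
      by_cases hD : D' (τ u) (τ v)
      · exact hDG _ _ ((h u v).mpr hD)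
      · have : D' (τ v) (τ u) := by
          by_contra hvu
          exact hD ((hdir' _ _ hadj).mpr hvu)
        exact (hDG _ _ ((h v u).mpr this)).symm
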